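/- arXiv:1511.02923 — 3 statements merged into one kernel-verified Lean document; each statement's English description precedes it below -/
import Mathlib

section
/- With φ the exponent-truncation map on ℤ[x₁,…,x_N] (replacing every exponent ≥ 3 in each monomial by 2), for every i and every polynomial p not involving xᵢ, φ((1 − xᵢ²)(1 − xᵢ²·p)) = 1 − xᵢ². -/
open MvPolynomial

/-- The exponent-truncation map `φ` on `ℤ[x₁,…,x_N]`: in each monomial every
exponent `e ≥ 3` is replaced by `2`, extended additively. -/
noncomputable def phi (N : ℕ) (p : MvPolynomial (Fin N) ℤ) : MvPolynomial (Fin N) ℤ :=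
  (AddMonoidAlgebra.coeff p).sum fun m c => monomial (Finsupp.mapRange (fun e => min e 2) (by simp) m) c

private noncomputable def trunc {N : ℕ} (m : Fin N →₀ ℕ) : Fin N →₀ ℕ :=
  Finsupp.mapRange (fun e => min e 2) (by simp) m

private noncomputable def phiHom (N : ℕ) :
    MvPolynomial (Fin N) ℤ →+ MvPolynomial (Fin N) ℤ :=
  (AddMonoidAlgebra.coeffAddEquiv.symm.toAddMonoidHom.comp
    (Finsupp.mapDomain.addMonoidHom trunc)).comp AddMonoidAlgebra.coeffAddEquiv.toAddMonoidHom

lemma phiHom_apply {N : ℕ} (p : MvPolynomial (Fin N) ℤ) :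
    phiHom N p = AddMonoidAlgebra.ofCoeff (Finsupp.mapDomain trunc (AddMonoidAlgebra.coeff p)) := rfl

lemma phi_eq_hom {N : ℕ} (p : MvPolynomial (Fin N) ℤ) : phi N p = phiHom N p := by
  rw [phi, phiHom_apply, Finsupp.mapDomain, AddMonoidAlgebra.ofCoeff_finsuppSum]
  exact Finsupp.sum_congr fun m _ => (single_eq_monomial _ _).symm

lemma phi_monomial {N : ℕ} (m : Fin N →₀ ℕ) (c : ℤ) :
    phi N (monomial m c) = monomial (trunc m) c := by
  rw [phi_eq_hom, phiHom_apply,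
    ← single_eq_monomial, AddMonoidAlgebra.coeff_single, Finsupp.mapDomain_single]
  exact single_eq_monomial _ _

lemma trunc_add_single {N : ℕ} (i : Fin N) (a : ℕ) (ha : 2 ≤ a) (m : Fin N →₀ ℕ)
    (hm : m i = 0) : trunc (Finsupp.single i a + m) = trunc (Finsupp.single i 2 + m) := by
  ext j
  simp only [trunc, Finsupp.mapRange_apply, Finsupp.add_apply, Finsupp.single_apply]
  rcases eq_or_ne i j with rfl | h
  · simp [hm, Nat.min_eq_right ha]
  · simp [h]

lemma phi_pow_mul {N : ℕ} (i : Fin N) (a : ℕ) (ha : 2 ≤ a) (p : MvPolynomial (Fin N) ℤ)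
    (hp : ∀ m ∈ p.support, m i = 0) :
    phi N (X i ^ a * p) = phi N (X i ^ 2 * p) := by
  conv_lhs => rw [← p.support_sum_monomial_coeff]
  conv_rhs => rw [← p.support_sum_monomial_coeff]
  rw [Finset.mul_sum, Finset.mul_sum, phi_eq_hom, phi_eq_hom, map_sum, map_sum]
  refine Finset.sum_congr rfl fun m hm => ?_
  rw [X_pow_eq_monomial, X_pow_eq_monomial, monomial_mul, monomial_mul,
    ← phi_eq_hom, ← phi_eq_hom, phi_monomial, phi_monomial,
    trunc_add_single i a ha m (hp m hm)]

theorem phi_prop_b {N : ℕ} (i : Fin N) (p : MvPolynomial (Fin N) ℤ)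
    (hp : ∀ m ∈ p.support, m i = 0) :
    phi N ((1 - X i ^ 2) * (1 - X i ^ 2 * p)) = 1 - X i ^ 2 := by
  have hone : phi N 1 = 1 := by
    rw [show (1 : MvPolynomial (Fin N) ℤ) = monomial 0 1 by simp, phi_monomial]
    simp [trunc]
  have hX2 : phi N (X i ^ 2) = X i ^ 2 := by
    have ht : trunc (Finsupp.single i 2) = Finsupp.single i 2 := by
      rw [trunc, Finsupp.mapRange_single]; norm_num
    rw [X_pow_eq_monomial, phi_monomial, ht, ← X_pow_eq_monomial]
  have hexp : (1 - X i ^ 2) * (1 - X i ^ 2 * p)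
      = 1 - X i ^ 2 - X i ^ 2 * p + X i ^ 4 * p := by ring
  rw [hexp]
  rw [phi_eq_hom, map_add, map_sub, map_sub, ← phi_eq_hom, ← phi_eq_hom, ← phi_eq_hom,
    ← phi_eq_hom, phi_pow_mul i 4 (by norm_num) p hp, hone, hX2]
  ring
end

section
/- Let A be a block matrix equation P·(V ⊕ 0_k) = D·Q where P, Q are square matrices of unit determinant, V is an invertible n×n matrix, D = D' ⊕ 0_k with D' an invertible n×n diagonal matrix, and 0_k the k×k zero matrix. Writing P and Q in corresponding blocks P = [[P₁,P₃],[P₂,P₄]], Q = [[Q₁,Q₂],[Q₃,Q₄]], one has P₂V = 0, D'Q₂ = 0, P₁V = D'Q₁, hence P₂ = 0, Q₂ = 0, det(P₁) and det(Q₁) are units, and therefore D' is a diagonal form of V (i.e., P₁VQ₁' = D' for suitable unit-determinant matrices). -/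
open Matrix

theorem aux_cancel_right {R : Type*} [CommRing R] [IsDomain R] {m n : ℕ}
    (A : Matrix (Fin m) (Fin n) R) (V : Matrix (Fin n) (Fin n) R)
    (hV : V.det ≠ 0) (h : A * V = 0) : A = 0 := by
  have h2 : A * V * V.adjugate = 0 := by rw [h]; simp
  rw [Matrix.mul_assoc, Matrix.mul_adjugate] at h2
  ext i j
  have := congrFun (congrFun h2 i) j
  simp at this
  exact this.resolve_left hV

theorem aux_cancel_left {R : Type*} [CommRing R] [IsDomain R] {m n : ℕ}
    (V : Matrix (Fin n) (Fin n) R) (A : Matrix (Fin n) (Fin m) R)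
    (hV : V.det ≠ 0) (h : V * A = 0) : A = 0 := by
  have h2 : V.adjugate * (V * A) = 0 := by rw [h]; simp
  rw [← Matrix.mul_assoc, Matrix.adjugate_mul] at h2
  ext i j
  have := congrFun (congrFun h2 i) j
  simp at this
  exact this.resolve_left hV

/-- Block matrix analysis: from `P · (V ⊕ 0) = (D' ⊕ 0) · Q` with `P, Q` of unit
determinant, `V` and the diagonal `D'` invertible, one deduces the block identities
and that `D'` is a diagonal form of `V`. -/
theorem block_diagonal_form {R : Type*} [CommRing R] [IsDomain R] {n k : ℕ}
    (V : Matrix (Fin n) (Fin n) R) (hV : V.det ≠ 0)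
    (dvec : Fin n → R) (hD : (Matrix.diagonal dvec).det ≠ 0)
    (P₁ : Matrix (Fin n) (Fin n) R) (P₃ : Matrix (Fin n) (Fin k) R)
    (P₂ : Matrix (Fin k) (Fin n) R) (P₄ : Matrix (Fin k) (Fin k) R)
    (Q₁ : Matrix (Fin n) (Fin n) R) (Q₂ : Matrix (Fin n) (Fin k) R)
    (Q₃ : Matrix (Fin k) (Fin n) R) (Q₄ : Matrix (Fin k) (Fin k) R)
    (hP : IsUnit (fromBlocks P₁ P₃ P₂ P₄).det)
    (hQ : IsUnit (fromBlocks Q₁ Q₂ Q₃ Q₄).det)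
    (heq : fromBlocks P₁ P₃ P₂ P₄ * fromBlocks V 0 0 (0 : Matrix (Fin k) (Fin k) R) =
      fromBlocks (Matrix.diagonal dvec) 0 0 (0 : Matrix (Fin k) (Fin k) R) *
        fromBlocks Q₁ Q₂ Q₃ Q₄) :
    P₂ * V = 0 ∧ Matrix.diagonal dvec * Q₂ = 0 ∧
      P₁ * V = Matrix.diagonal dvec * Q₁ ∧
      P₂ = 0 ∧ Q₂ = 0 ∧ IsUnit P₁.det ∧ IsUnit Q₁.det ∧
      ∃ P' Q' : Matrix (Fin n) (Fin n) R, IsUnit P'.det ∧ IsUnit Q'.det ∧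
        P' * V * Q' = Matrix.diagonal dvec := by
  rw [Matrix.fromBlocks_multiply, Matrix.fromBlocks_multiply] at heq
  simp only [Matrix.mul_zero, Matrix.zero_mul, add_zero, zero_add] at heq
  have h11 : P₁ * V = Matrix.diagonal dvec * Q₁ := congrArg Matrix.toBlocks₁₁ heq
  have h12 : (0 : Matrix (Fin n) (Fin k) R) = Matrix.diagonal dvec * Q₂ :=
    congrArg Matrix.toBlocks₁₂ heq
  have h21 : P₂ * V = 0 := congrArg Matrix.toBlocks₂₁ heq
  have hP₂ : P₂ = 0 := aux_cancel_right P₂ V hV h21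
  have hQ₂ : Q₂ = 0 := aux_cancel_left (Matrix.diagonal dvec) Q₂ hD h12.symm
  have hPdet : IsUnit P₁.det := by
    rw [hP₂, Matrix.det_fromBlocks_zero₂₁] at hP
    exact isUnit_of_mul_isUnit_left hP
  have hQdet : IsUnit Q₁.det := by
    rw [hQ₂, Matrix.det_fromBlocks_zero₁₂] at hQ
    exact isUnit_of_mul_isUnit_left hQ
  refine ⟨h21, h12.symm, h11, hP₂, hQ₂, hPdet, hQdet, P₁, Q₁⁻¹, hPdet, ?_, ?_⟩
  · rw [Matrix.det_nonsing_inv]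
    exact hQdet.ringInverse
  · rw [h11, Matrix.mul_assoc, Matrix.mul_nonsing_inv _ hQdet, Matrix.mul_one]
end

section
/- The determinant of the Varchenko matrix of the arrangement of d+1 pseudospheres through a common point (minimal non-semigeneral case) equals (1−x₁²)^{2^d−2}·(1−x₂²)^{2^d−2}⋯(1−x_{d+1}²)^{2^d−2}·(1−x₁²x₂²⋯x_{d+1}²). -/
set_option maxRecDepth 4000


open MvPolynomial

noncomputable def x1 : MvPolynomial (Fin 3) ℤ := X 0
noncomputable def x2 : MvPolynomial (Fin 3) ℤ := X 1
noncomputable def x3 : MvPolynomial (Fin 3) ℤ := X 2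

/-- The Varchenko matrix of three pseudocircles in `S²` through a common point
(the minimal non-semigeneral case, `d = 2`): the six regions have sign vectors
`(+,+,+), (−,+,+), (−,−,+), (−,−,−), (+,−,−), (+,+,−)`. -/
noncomputable def V6 : Matrix (Fin 6) (Fin 6) (MvPolynomial (Fin 3) ℤ) :=
  Matrix.of
    ![![1, x1, x1*x2, x1*x2*x3, x2*x3, x3],
      ![x1, 1, x2, x2*x3, x1*x2*x3, x1*x3],
      ![x1*x2, x2, 1, x3, x1*x3, x1*x2*x3],
      ![x1*x2*x3, x2*x3, x3, 1, x1, x1*x2],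
      ![x2*x3, x1*x2*x3, x1*x3, x1, 1, x2],
      ![x3, x1*x3, x1*x2*x3, x1*x2, x2, 1]]

/-- Block determinant identity: `det [[A,B],[B,A]] = det (A+B) * det (A-B)`. -/
lemma det_fromBlocks_comm {R : Type*} [CommRing R] (A B : Matrix (Fin 3) (Fin 3) R) :
    (Matrix.fromBlocks A B B A).det = (A + B).det * (A - B).det := by
  have h : (Matrix.fromBlocks 1 0 (-1) 1 : Matrix (Fin 3 ⊕ Fin 3) (Fin 3 ⊕ Fin 3) R) *
      Matrix.fromBlocks A B B A * Matrix.fromBlocks 1 0 1 1 =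
      Matrix.fromBlocks (A + B) B 0 (A - B) := by
    simp [Matrix.fromBlocks_multiply]
    abel
  have hL : (Matrix.fromBlocks 1 0 (-1) 1 :
      Matrix (Fin 3 ⊕ Fin 3) (Fin 3 ⊕ Fin 3) R).det = 1 := by
    rw [Matrix.det_fromBlocks_zero₁₂]; norm_num
  have hR : (Matrix.fromBlocks 1 0 1 1 :
      Matrix (Fin 3 ⊕ Fin 3) (Fin 3 ⊕ Fin 3) R).det = 1 := by
    rw [Matrix.det_fromBlocks_zero₁₂]; norm_num
  calc (Matrix.fromBlocks A B B A).det
      = (Matrix.fromBlocks 1 0 (-1) 1 :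
          Matrix (Fin 3 ⊕ Fin 3) (Fin 3 ⊕ Fin 3) R).det *
        (Matrix.fromBlocks A B B A).det *
        (Matrix.fromBlocks 1 0 1 1 :
          Matrix (Fin 3 ⊕ Fin 3) (Fin 3 ⊕ Fin 3) R).det := by
        rw [hL, hR]; ring
    _ = (Matrix.fromBlocks (A + B) B 0 (A - B)).det := by
        rw [← Matrix.det_mul, ← Matrix.det_mul, h]
    _ = (A + B).det * (A - B).det := Matrix.det_fromBlocks_zero₂₁ _ _ _

noncomputable def Pblk : Matrix (Fin 3) (Fin 3) (MvPolynomial (Fin 3) ℤ) :=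
  !![1, x1, x1*x2; x1, 1, x2; x1*x2, x2, 1]

noncomputable def Qblk : Matrix (Fin 3) (Fin 3) (MvPolynomial (Fin 3) ℤ) :=
  !![x1*x2*x3, x2*x3, x3; x2*x3, x1*x2*x3, x1*x3; x3, x1*x3, x1*x2*x3]

def e6 : Fin 6 ≃ (Fin 3 ⊕ Fin 3) where
  toFun := ![Sum.inl 0, Sum.inl 1, Sum.inl 2, Sum.inr 0, Sum.inr 1, Sum.inr 2]
  invFun := Sum.elim ![0, 1, 2] ![3, 4, 5]
  left_inv := by decide
  right_inv := by decide

theorem det_V6 :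
    V6.det = (1 - x1^2)^2 * (1 - x2^2)^2 * (1 - x3^2)^2 *
      (1 - x1^2 * x2^2 * x3^2) := by
  have hV : V6 = (Matrix.fromBlocks Pblk Qblk Qblk Pblk).submatrix e6 e6 := by
    apply Matrix.ext
    intro i j
    fin_cases i <;> fin_cases j <;> rfl
  rw [hV, Matrix.det_submatrix_equiv_self, det_fromBlocks_comm]
  rw [show Pblk + Qblk = !![1 + x1*x2*x3, x1 + x2*x3, x1*x2 + x3;
      x1 + x2*x3, 1 + x1*x2*x3, x2 + x1*x3;
      x1*x2 + x3, x2 + x1*x3, 1 + x1*x2*x3] by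
    apply Matrix.ext; intro i j; fin_cases i <;> fin_cases j <;> rfl]
  rw [show Pblk - Qblk = !![1 - x1*x2*x3, x1 - x2*x3, x1*x2 - x3;
      x1 - x2*x3, 1 - x1*x2*x3, x2 - x1*x3;
      x1*x2 - x3, x2 - x1*x3, 1 - x1*x2*x3] by
    apply Matrix.ext; intro i j; fin_cases i <;> fin_cases j <;> rfl]
  rw [Matrix.det_fin_three, Matrix.det_fin_three]
  norm_num [Matrix.cons_val_zero, Matrix.cons_val_one, Matrix.head_cons,
    Matrix.cons_val_two, Matrix.tail_cons, Matrix.head_fin_const]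
  ring
end
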